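/- Let u(t,x) = a(t,x) + z(t,x) where a, p, q are holomorphic near the origin in ℂ^2, z satisfies z^3 = p·z + q with 3z^2 - p ≠ 0, and suppose a_x = 0, q_t = a·q_x + (1/3)·p·p_x, p_t = a·p_x + q_x, and a_t = (1/3)·p_x. Then u satisfies the inviscid Burgers equation u_t - u·u_x = 0. -/

import Mathlib

/-- Partial derivative in the first (time) variable. -/
noncomputable def pdt (f : ℂ × ℂ → ℂ) (w : ℂ × ℂ) : ℂ :=
  deriv (fun s => f (s, w.2)) w.1

/-- Partial derivative in the second (space) variable. -/
noncomputable def pdx (f : ℂ × ℂ → ℂ) (w : ℂ × ℂ) : ℂ :=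
  deriv (fun y => f (w.1, y)) w.2

theorem stmt_5 (U : Set (ℂ × ℂ)) (hU : IsOpen U) (h0 : (0, 0) ∈ U)
    (a p q z : ℂ × ℂ → ℂ)
    (ha : ∀ w ∈ U, DifferentiableAt ℂ a w)
    (hp : ∀ w ∈ U, DifferentiableAt ℂ p w)
    (hq : ∀ w ∈ U, DifferentiableAt ℂ q w)
    (hz : ∀ w ∈ U, DifferentiableAt ℂ z w)
    (hrel : ∀ w ∈ U, z w ^ 3 = p w * z w + q w)
    (hne : ∀ w ∈ U, 3 * z w ^ 2 - p w ≠ 0)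
    (hax : ∀ w ∈ U, pdx a w = 0)
    (hqt : ∀ w ∈ U, pdt q w = a w * pdx q w + (1 / 3) * p w * pdx p w)
    (hpt : ∀ w ∈ U, pdt p w = a w * pdx p w + pdx q w)
    (hat : ∀ w ∈ U, pdt a w = (1 / 3) * pdx p w) :
    ∀ w ∈ U, pdt (fun v => a v + z v) w -
      (a w + z w) * pdx (fun v => a v + z v) w = 0 := by
  intro w hw
  have hwe : (w.1, w.2) = w := Prod.mk.eta
  -- slice maps
  have hLt : DifferentiableAt ℂ (fun s : ℂ => (s, w.2)) w.1 := by fun_prop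
  have hLx : DifferentiableAt ℂ (fun y : ℂ => (w.1, y)) w.2 := by fun_prop
  have slicet : ∀ f : ℂ × ℂ → ℂ, DifferentiableAt ℂ f w →
      DifferentiableAt ℂ (fun s => f (s, w.2)) w.1 := by
    intro f hf
    rw [← hwe] at hf
    exact hf.comp w.1 hLt
  have slicex : ∀ f : ℂ × ℂ → ℂ, DifferentiableAt ℂ f w →
      DifferentiableAt ℂ (fun y => f (w.1, y)) w.2 := by
    intro f hf
    rw [← hwe] at hf
    exact hf.comp w.2 hLx
  have hat' := slicet a (ha w hw)
  have hpt' := slicet p (hp w hw)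
  have hqt' := slicet q (hq w hw)
  have hzt' := slicet z (hz w hw)
  have hax' := slicex a (ha w hw)
  have hpx' := slicex p (hp w hw)
  have hqx' := slicex q (hq w hw)
  have hzx' := slicex z (hz w hw)
  -- neighborhood along slices
  have hmemT : ∀ᶠ s in nhds w.1, (s, w.2) ∈ U := by
    have : ContinuousAt (fun s : ℂ => (s, w.2)) w.1 := hLt.continuousAt
    have := this.preimage_mem_nhds (by rw [hwe]; exact hU.mem_nhds hw)
    exact this
  have hmemX : ∀ᶠ y in nhds w.2, (w.1, y) ∈ U := by
    have : ContinuousAt (fun y : ℂ => (w.1, y)) w.2 := hLx.continuousAt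
    have := this.preimage_mem_nhds (by rw [hwe]; exact hU.mem_nhds hw)
    exact this
  -- differentiate the relation in t
  have heqT : deriv (fun s => z (s, w.2) ^ 3) w.1
      = deriv (fun s => p (s, w.2) * z (s, w.2) + q (s, w.2)) w.1 := by
    apply Filter.EventuallyEq.deriv_eq
    filter_upwards [hmemT] with s hs
    exact hrel _ hs
  have hdT1 : deriv (fun s => z (s, w.2) ^ 3) w.1
      = 3 * z (w.1, w.2) ^ 2 * deriv (fun s => z (s, w.2)) w.1 := by
    rw [show (fun s => z (s, w.2) ^ 3) = (fun s => z (s, w.2)) ^ 3 from rfl, deriv_pow hzt' 3]; push_cast; ring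
  have hdT2 : deriv (fun s => p (s, w.2) * z (s, w.2) + q (s, w.2)) w.1
      = deriv (fun s => p (s, w.2)) w.1 * z (w.1, w.2)
        + p (w.1, w.2) * deriv (fun s => z (s, w.2)) w.1
        + deriv (fun s => q (s, w.2)) w.1 := by
    rw [deriv_fun_add (hpt'.fun_mul hzt') hqt', deriv_fun_mul hpt' hzt']
  have key_t : pdt z w * (3 * z w ^ 2 - p w) = pdt p w * z w + pdt q w := by
    have h := heqT
    rw [hdT1, hdT2, hwe] at h
    simp only [pdt]
    linear_combination h
  -- differentiate the relation in x
  have heqX : deriv (fun y => z (w.1, y) ^ 3) w.2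
      = deriv (fun y => p (w.1, y) * z (w.1, y) + q (w.1, y)) w.2 := by
    apply Filter.EventuallyEq.deriv_eq
    filter_upwards [hmemX] with y hy
    exact hrel _ hy
  have hdX1 : deriv (fun y => z (w.1, y) ^ 3) w.2
      = 3 * z (w.1, w.2) ^ 2 * deriv (fun y => z (w.1, y)) w.2 := by
    rw [show (fun y => z (w.1, y) ^ 3) = (fun y => z (w.1, y)) ^ 3 from rfl, deriv_pow hzx' 3]; push_cast; ring
  have hdX2 : deriv (fun y => p (w.1, y) * z (w.1, y) + q (w.1, y)) w.2
      = deriv (fun y => p (w.1, y)) w.2 * z (w.1, w.2)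
        + p (w.1, w.2) * deriv (fun y => z (w.1, y)) w.2
        + deriv (fun y => q (w.1, y)) w.2 := by
    rw [deriv_fun_add (hpx'.fun_mul hzx') hqx', deriv_fun_mul hpx' hzx']
  have key_x : pdx z w * (3 * z w ^ 2 - p w) = pdx p w * z w + pdx q w := by
    have h := heqX
    rw [hdX1, hdX2, hwe] at h
    simp only [pdx]
    linear_combination h
  -- split the derivatives of the sum
  have hsum_t : pdt (fun v => a v + z v) w = pdt a w + pdt z w := by
    simp only [pdt]
    exact deriv_add hat' hzt'
  have hsum_x : pdx (fun v => a v + z v) w = pdx a w + pdx z w := by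
    simp only [pdx]
    exact deriv_add hax' hzx'
  rw [hsum_t, hsum_x, hax w hw, hat w hw]
  have hDne := hne w hw
  have hE : ((1 / 3) * pdx p w + pdt z w - (a w + z w) * (0 + pdx z w))
      * (3 * z w ^ 2 - p w) = 0 := by
    linear_combination key_t - (a w + z w) * key_x + z w * hpt w hw + hqt w hw
  exact (mul_eq_zero.mp hE).resolve_right hDne
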